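/- Let X be a Banach space with a Schauder decomposition with associated projections (P_n). If X has the scalar-plus-horizontally-approximable property (every bounded operator on X is λI + A with A ∈ HA(X)) and X is infinite dimensional, then the Schauder decomposition (X_n) is shrinking. -/

import Mathlib

open Filter Topology

/-- If an infinite dimensional Banach space `X` with a Schauder decomposition
(projections `P n`) has the scalar-plus-horizontally-approximable property (every bounded
operator is `λI + A` with `A` horizontally approximable), then the Schauder decomposition is
shrinking, i.e. `⋃_n P_n^*(X^*)` is norm-dense in `X^*`. -/
theorem stmt15 (X : Type*) [NormedAddCommGroup X] [NormedSpace ℂ X] [CompleteSpace X]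
    (hinf : ¬ FiniteDimensional ℂ X)
    (P : ℕ → X →L[ℂ] X)
    (hP_proj : ∀ m n, (P m).comp (P n) = P (min m n))
    (hP_lim : ∀ x : X, Tendsto (fun n => P n x) atTop (𝓝 x))
    (hsha : ∀ T : X →L[ℂ] X, ∃ (c : ℂ) (A : X →L[ℂ] X),
      Tendsto (fun n => ((P n).comp A).comp (P n)) atTop (𝓝 A) ∧
        T = c • ContinuousLinearMap.id ℂ X + A) :
    Dense (⋃ n, Set.range fun f : X →L[ℂ] ℂ => f.comp (P n)) := by
  have hnt : Nontrivial X := by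
    rcases subsingleton_or_nontrivial X with hs | hn
    · exact absurd (Module.Finite.of_basis (Module.Basis.empty X (R := ℂ) (ι := Fin 0))) hinf
    · exact hn
  intro g
  obtain ⟨x₀, hx₀⟩ := exists_ne (0 : X)
  obtain ⟨h, hh1, hhx⟩ := exists_dual_vector ℂ x₀ (norm_ne_zero_iff.mpr hx₀)
  -- uniform bound on the projections, by Banach–Steinhaus
  obtain ⟨C, hC⟩ : ∃ C, ∀ n, ‖P n‖ ≤ C := by
    apply banach_steinhaus
    intro x
    obtain ⟨c, hc⟩ := (hP_lim x).norm.bddAbove_range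
    exact ⟨c, fun n => hc ⟨n, rfl⟩⟩
  have hC0 : (0 : ℝ) ≤ C := le_trans (norm_nonneg (P 0)) (hC 0)
  -- the rank one operator T x = g x • x₀
  set T : X →L[ℂ] X := g.smulRight x₀ with hTdef
  obtain ⟨c, A, hA, hTA⟩ := hsha T
  -- idempotency of P n
  have hPP : ∀ n (x : X), P n (P n x) = P n x := by
    intro n x
    have := congrArg (fun B : X →L[ℂ] X => B x) (hP_proj n n)
    simpa using this
  by_cases hc : c = 0
  · -- T = A is horizontally approximable; push through h and rescale
    subst hc
    rw [zero_smul, zero_add] at hTA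
    have hx₀n : (‖x₀‖ : ℂ) ≠ 0 := by
      simpa using (norm_ne_zero_iff.mpr hx₀)
    have key : Tendsto
        (fun n => (‖x₀‖ : ℂ)⁻¹ •
          ((ContinuousLinearMap.compL ℂ X X ℂ h) (((P n).comp A).comp (P n)))) atTop
        (𝓝 ((‖x₀‖ : ℂ)⁻¹ • (ContinuousLinearMap.compL ℂ X X ℂ h) A)) :=
      (((ContinuousLinearMap.compL ℂ X X ℂ h).continuous.tendsto A).comp hA).const_smul _
    have hgeq : (‖x₀‖ : ℂ)⁻¹ • (ContinuousLinearMap.compL ℂ X X ℂ h) A = g := by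
      ext x
      have hAx : A x = g x • x₀ := by rw [← hTA]; simp [hTdef]
      simp only [ContinuousLinearMap.smul_apply, ContinuousLinearMap.compL_apply,
        ContinuousLinearMap.coe_comp', Function.comp_apply, hAx, map_smul, hhx,
        smul_eq_mul]
      field_simp
      exact mul_comm _ _
    rw [hgeq] at key
    refine mem_closure_of_tendsto key (Eventually.of_forall fun n => ?_)
    refine Set.mem_iUnion.2 ⟨n, ⟨(‖x₀‖ : ℂ)⁻¹ • (h.comp ((P n).comp A)), ?_⟩⟩
    simp [ContinuousLinearMap.smul_comp, ContinuousLinearMap.comp_assoc,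
      ContinuousLinearMap.compL_apply]
  · -- c ≠ 0 forces P N = I for some N
    set Q : ℕ → X →L[ℂ] X := fun n => ContinuousLinearMap.id ℂ X - P n with hQdef
    have hQapp : ∀ n (x : X), Q n x = x - P n x := fun n x => rfl
    have hPQ : ∀ n (x : X), P n (Q n x) = 0 := by
      intro n x
      simp [hQapp, map_sub, hPP]
    have hQQ : ∀ n (x : X), Q n (Q n x) = Q n x := by
      intro n x
      simp [hQapp, map_sub, hPP]
    have hQnorm : ∀ n, ‖Q n‖ ≤ 1 + C := by
      intro n
      refine (norm_sub_le _ _).trans (add_le_add ?_ (hC n))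
      simpa using (ContinuousLinearMap.norm_id_le (α := X))
    -- Q n ∘ A ∘ Q n tends to 0
    have hAsub : Tendsto (fun n => ‖A - ((P n).comp A).comp (P n)‖) atTop (𝓝 0) := by
      have := (tendsto_iff_norm_sub_tendsto_zero).1 hA
      simpa [norm_sub_rev] using this
    have hQAQ : Tendsto (fun n => ‖(Q n).comp (A.comp (Q n))‖) atTop (𝓝 0) := by
      have heq : ∀ n, (Q n).comp (A.comp (Q n))
          = (Q n).comp ((A - ((P n).comp A).comp (P n)).comp (Q n)) := by
        intro n
        ext x
        simp [ContinuousLinearMap.comp_apply, hPQ, map_sub]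
      refine squeeze_zero (fun n => norm_nonneg _) (fun n => ?_)
        (by simpa using ((hAsub.const_mul (1 + C)).const_mul (1 + C)) : Tendsto
          (fun n => (1 + C) * ((1 + C) * ‖A - ((P n).comp A).comp (P n)‖)) atTop (𝓝 0))
      rw [heq n]
      calc ‖(Q n).comp ((A - ((P n).comp A).comp (P n)).comp (Q n))‖
          ≤ ‖Q n‖ * ‖(A - ((P n).comp A).comp (P n)).comp (Q n)‖ :=
            ContinuousLinearMap.opNorm_comp_le _ _
        _ ≤ ‖Q n‖ * (‖A - ((P n).comp A).comp (P n)‖ * ‖Q n‖) := by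
            gcongr; exact ContinuousLinearMap.opNorm_comp_le _ _
        _ ≤ (1 + C) * ((1 + C) * ‖A - ((P n).comp A).comp (P n)‖) := by
            rw [mul_comm ‖A - ((P n).comp A).comp (P n)‖ ‖Q n‖]
            gcongr <;> first | exact hQnorm n | positivity
    -- Q n ∘ T ∘ Q n tends to 0
    have hQTQ : Tendsto (fun n => ‖(Q n).comp (T.comp (Q n))‖) atTop (𝓝 0) := by
      have heq : ∀ n, (Q n).comp (T.comp (Q n))
          = (g.comp (Q n)).smulRight (Q n x₀) := by
        intro n
        ext x
        simp [hTdef, ContinuousLinearMap.comp_apply, map_smul]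
      have hx₀lim : Tendsto (fun n => ‖Q n x₀‖) atTop (𝓝 0) := by
        have : Tendsto (fun n => x₀ - P n x₀) atTop (𝓝 (x₀ - x₀)) :=
          tendsto_const_nhds.sub (hP_lim x₀)
        simpa [hQapp] using (tendsto_zero_iff_norm_tendsto_zero).1 (by simpa using this)
      refine squeeze_zero (fun n => norm_nonneg _) (fun n => ?_)
        (by simpa using hx₀lim.const_mul (‖g‖ * (1 + C)) : Tendsto
          (fun n => ‖g‖ * (1 + C) * ‖Q n x₀‖) atTop (𝓝 0))
      rw [heq n]
      calc ‖(g.comp (Q n)).smulRight (Q n x₀)‖ = ‖g.comp (Q n)‖ * ‖Q n x₀‖ :=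
            ContinuousLinearMap.norm_smulRight_apply _ _
        _ ≤ ‖g‖ * (1 + C) * ‖Q n x₀‖ := by
            gcongr
            exact (ContinuousLinearMap.opNorm_comp_le _ _).trans
              (by gcongr; exact hQnorm n)
    -- hence ‖Q n‖ → 0
    have hQlim : Tendsto (fun n => ‖Q n‖) atTop (𝓝 0) := by
      have hkey : ∀ n, ‖c‖ * ‖Q n‖
          ≤ ‖(Q n).comp (T.comp (Q n))‖ + ‖(Q n).comp (A.comp (Q n))‖ := by
        intro n
        have heq : c • Q n = (Q n).comp (T.comp (Q n)) - (Q n).comp (A.comp (Q n)) := by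
          ext x
          have hTx : T (Q n x) = c • Q n x + A (Q n x) := by
            rw [hTA]; simp
          simp [ContinuousLinearMap.comp_apply, hTx, map_add, map_smul, hQQ]
        calc ‖c‖ * ‖Q n‖ = ‖c • Q n‖ := (norm_smul c (Q n)).symm
          _ ≤ _ := by rw [heq]; exact norm_sub_le _ _
      have h0 : Tendsto (fun n => ‖c‖ * ‖Q n‖) atTop (𝓝 0) := by
        refine squeeze_zero (fun n => by positivity) hkey ?_
        simpa using hQTQ.add hQAQ
      have habs : (0 : ℝ) < ‖c‖ := by
        exact norm_pos_iff.mpr hc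
      have h1 : Tendsto (fun n => (‖c‖)⁻¹ * (‖c‖ * ‖Q n‖)) atTop
          (𝓝 0) := by simpa using h0.const_mul (‖c‖)⁻¹
      refine h1.congr fun n => ?_
      rw [← mul_assoc, inv_mul_cancel₀ habs.ne', one_mul]
    -- eventually Q n = 0, i.e. P n = id
    have hev : ∀ᶠ n in atTop, ‖Q n‖ < 1 :=
      hQlim.eventually (eventually_lt_nhds zero_lt_one)
    obtain ⟨N, hN⟩ := hev.exists
    have hQN : Q N = 0 := by
      by_contra hne
      have hpos : 0 < ‖Q N‖ := norm_pos_iff.mpr hne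
      have : ‖Q N‖ ≤ ‖Q N‖ * ‖Q N‖ := by
        have : (Q N).comp (Q N) = Q N := by ext x; exact hQQ N x
        calc ‖Q N‖ = ‖(Q N).comp (Q N)‖ := by rw [this]
          _ ≤ ‖Q N‖ * ‖Q N‖ := ContinuousLinearMap.opNorm_comp_le _ _
      nlinarith
    have hPN : P N = ContinuousLinearMap.id ℂ X := by
      have := sub_eq_zero.mp hQN
      exact this.symm
    refine subset_closure ?_
    refine Set.mem_iUnion.2 ⟨N, ⟨g, ?_⟩⟩
    rw [hPN]
    rfl
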